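/- arXiv:2405.05172 — 2 statements merged into one kernel-verified Lean document; each statement's English description precedes it below -/
import Mathlib

section
/- Let (X,d) be a doubling metric space and (Y,d_Y) an arbitrary metric space. Let p > 1 and α ∈ (0,1), and let f : X → Y be a (p,α)-compactly Hölder mapping. Then for every bounded set E ⊆ X with upper Minkowski dimension dim_B E = d_E, the image satisfies dim_B f(E) ≤ p·d_E/(α·p + d_E). -/
open Filter Metric Set Topology MeasureTheory Bornology
open scoped ENNReal NNReal

noncomputable section

/-- `coverNum E r` is the smallest number of sets of diameter at most `r`
needed to cover `E` (`∞` if no finite cover exists). -/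
def coverNum {X : Type*} [MetricSpace X] (E : Set X) (r : ℝ) : ℝ≥0∞ :=
  ⨅ (n : ℕ) (_ : ∃ U : Fin n → Set X,
      (∀ i, EMetric.diam (U i) ≤ ENNReal.ofReal r) ∧ E ⊆ ⋃ i, U i), (n : ℝ≥0∞)

open scoped Classical in
/-- The upper Minkowski (box-counting) dimension:
`dim_B E = limsup_{r → 0⁺} log N(E,r) / log (1/r)`. -/
def dimB {X : Type*} [MetricSpace X] (E : Set X) : EReal :=
  Filter.limsup
    (fun r : ℝ =>
      if coverNum E r = ⊤ then (⊤ : EReal)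
      else ((Real.log (coverNum E r).toReal / Real.log (1 / r) : ℝ) : EReal))
    (𝓝[>] (0:ℝ))

/-- `X` is doubling with constant `Cd`: every ball of radius `2r` can be covered
by at most `Cd` balls of radius `r`. -/
def DoublingConst (X : Type*) [MetricSpace X] (Cd : ℝ) : Prop :=
  ∀ (x : X) (r : ℝ), 0 < r → ∃ t : Finset X,
    (t.card : ℝ) ≤ Cd ∧ Metric.ball x (2 * r) ⊆ ⋃ y ∈ t, Metric.ball y r

/-- A doubling metric space. -/
def DoublingSpace (X : Type*) [MetricSpace X] : Prop :=
  ∃ Cd : ℝ, 1 ≤ Cd ∧ DoublingConst X Cd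

/-- The `α`-Hölder coefficient `|f|_{α,B}` of `f` on the set `B`. -/
def holderCoef {X Y : Type*} [MetricSpace X] [MetricSpace Y]
    (α : ℝ) (f : X → Y) (B : Set X) : ℝ≥0∞ :=
  ⨆ (x ∈ B) (y ∈ B) (_ : x ≠ y), ENNReal.ofReal (dist (f x) (f y) / dist x y ^ α)

/-- `f : X → Y` is `(p,α)`-compactly Hölder: for every compact `E ⊆ X` and every
`ε ∈ (0,1)` there are `rE > 0` and `CE > 0` such that for every at most countable
collection of balls of common radius `r < rE` covering `E` whose `ε`-shrunken balls
are pairwise disjoint, the `p`-sum of the `α`-Hölder coefficients of `f` on the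
balls is at most `CE`. -/
def CompactlyHolder {X Y : Type*} [MetricSpace X] [MetricSpace Y]
    (p α : ℝ) (f : X → Y) : Prop :=
  ∀ E : Set X, IsCompact E → ∀ ε ∈ Set.Ioo (0:ℝ) 1,
    ∃ rE > (0:ℝ), ∃ CE > (0:ℝ),
      ∀ (I : Type) (_ : Countable I) (c : I → X) (r : ℝ), 0 < r → r < rE →
        (E ⊆ ⋃ i, Metric.ball (c i) r) →
        (Pairwise fun i j => Disjoint (Metric.ball (c i) (ε * r)) (Metric.ball (c j) (ε * r))) →
        ∑' i, holderCoef α f (Metric.ball (c i) r) ^ p ≤ ENNReal.ofReal CE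

section Aux

variable {X : Type*} [MetricSpace X] {E : Set X} {r : ℝ}

lemma coverNum_exists (h : coverNum E r ≠ ⊤) :
    ∃ n : ℕ, coverNum E r = n ∧ ∃ U : Fin n → Set X,
      (∀ i, EMetric.diam (U i) ≤ ENNReal.ofReal r) ∧ E ⊆ ⋃ i, U i := by
  set A : Set ℕ := {n | ∃ U : Fin n → Set X,
      (∀ i, EMetric.diam (U i) ≤ ENNReal.ofReal r) ∧ E ⊆ ⋃ i, U i} with hA
  have hne : A.Nonempty := by
    by_contra hemp
    apply h
    rw [coverNum]
    rw [iInf_eq_top]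
    intro n
    rw [iInf_eq_top]
    intro hn
    rw [Set.not_nonempty_iff_eq_empty, Set.eq_empty_iff_forall_notMem] at hemp
    exact absurd hn (hemp n)
  obtain hmem := Nat.sInf_mem hne
  refine ⟨sInf A, ?_, hmem⟩
  apply le_antisymm
  · exact iInf₂_le _ hmem
  · exact le_iInf₂ fun n hn => by exact_mod_cast Nat.sInf_le hn

lemma coverNum_le_card {ι : Type*} (s : Finset ι) (U : ι → Set X)
    (hd : ∀ i ∈ s, EMetric.diam (U i) ≤ ENNReal.ofReal r)
    (hc : E ⊆ ⋃ i ∈ s, U i) : coverNum E r ≤ s.card := by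
  have : ∃ V : Fin s.card → Set X,
      (∀ i, EMetric.diam (V i) ≤ ENNReal.ofReal r) ∧ E ⊆ ⋃ i, V i := by
    refine ⟨fun i => U (s.equivFin.symm i : ι), fun i => hd _ (s.equivFin.symm i).2, ?_⟩
    intro x hx
    obtain ⟨i, hi, hxi⟩ := Set.mem_iUnion₂.1 (hc hx)
    exact Set.mem_iUnion.2 ⟨s.equivFin ⟨i, hi⟩, by simpa using hxi⟩
  exact iInf_le_of_le s.card (iInf_le_of_le this le_rfl)

lemma card_le_coverNum (s : Finset X) (hs : ↑s ⊆ E)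
    (hsep : ∀ x ∈ s, ∀ y ∈ s, x ≠ y → r ≤ dist x y) {r' : ℝ} (hr' : 0 ≤ r') (h : r' < r) :
    (s.card : ℝ≥0∞) ≤ coverNum E r' := by
  refine le_iInf fun n => le_iInf fun hn => ?_
  obtain ⟨U, hd, hc⟩ := hn
  norm_cast
  have : ∀ x ∈ s, ∃ i : Fin n, x ∈ U i := fun x hx => Set.mem_iUnion.1 (hc (hs hx))
  choose g hg using this
  rcases s.eq_empty_or_nonempty with hse | ⟨x₀, hx₀⟩
  · simp [hse]
  haveI : Nonempty (Fin n) := ⟨g x₀ hx₀⟩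
  classical
  rw [← Finset.card_fin n]
  apply Finset.card_le_card_of_injOn (fun x => if hx : x ∈ s then g x hx else Classical.arbitrary _)
  · intro a ha; exact Finset.mem_univ _
  · intro a ha b hb hab
    simp only [Finset.mem_coe] at ha hb
    simp only at hab
    rw [dif_pos ha, dif_pos hb] at hab
    by_contra hne
    have h1 : dist a b ≤ r' := by
      have := EMetric.edist_le_diam_of_mem (hg a ha) (hab ▸ hg b hb)
      exact (edist_le_ofReal hr').1 (this.trans (hd _))
    exact absurd (hsep a ha b hb hne) (by linarith)

lemma sep_card_in_ball {Cd : ℝ} (hCd : 1 ≤ Cd) (hD : DoublingConst X Cd)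
    {t : ℝ} (ht : 0 < t) (m : ℕ) (z : X) (s : Finset X)
    (hs : ∀ x ∈ s, ∀ y ∈ s, x ≠ y → t ≤ dist x y)
    (hball : ↑s ⊆ ball z (2 ^ m * (t / 2))) : (s.card : ℝ) ≤ Cd ^ m := by
  classical
  induction m generalizing z s with
  | zero =>
    simp only [pow_zero, one_mul] at hball ⊢
    have : s.card ≤ 1 := by
      rw [Finset.card_le_one]
      intro a ha b hb
      by_contra hne
      have h1 := hs a ha b hb hne
      have h2 : dist a z < t / 2 := mem_ball.1 (hball ha)
      have h3 : dist b z < t / 2 := mem_ball.1 (hball hb)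
      have := dist_triangle_right a b z
      linarith
    calc (s.card : ℝ) ≤ 1 := by exact_mod_cast this
    _ = 1 := rfl
  | succ m ih =>
    have hR : 0 < 2 ^ m * (t / 2) := by positivity
    obtain ⟨w, hw, hcov⟩ := hD z (2 ^ m * (t / 2)) hR
    have hsub : s ⊆ w.biUnion (fun y => s.filter (fun x => x ∈ ball y (2 ^ m * (t / 2)))) := by
      intro x hx
      have : (x : X) ∈ ball z (2 * (2 ^ m * (t / 2))) := by
        have := hball hx
        rw [pow_succ] at this
        convert this using 2
        ring
      obtain ⟨y, hy, hxy⟩ := Set.mem_iUnion₂.1 (hcov this)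
      exact Finset.mem_biUnion.2 ⟨y, hy, Finset.mem_filter.2 ⟨hx, hxy⟩⟩
    have hcard : s.card ≤ ∑ y ∈ w, (s.filter (fun x => x ∈ ball y (2 ^ m * (t / 2)))).card :=
      le_trans (Finset.card_le_card hsub) (Finset.card_biUnion_le)
    have hcast : (s.card : ℝ) ≤ ∑ y ∈ w, ((s.filter (fun x => x ∈ ball y (2 ^ m * (t / 2)))).card : ℝ) := by
      exact_mod_cast hcard
    have hterm : ∀ y ∈ w, ((s.filter (fun x => x ∈ ball y (2 ^ m * (t / 2)))).card : ℝ) ≤ Cd ^ m := by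
      intro y hy
      apply ih y
      · intro a ha b hb hne
        exact hs a (Finset.mem_filter.1 ha).1 b (Finset.mem_filter.1 hb).1 hne
      · intro a ha
        simp only [Finset.coe_filter, Set.mem_setOf_eq] at ha
        exact ha.2
    calc (s.card : ℝ) ≤ ∑ y ∈ w, ((s.filter (fun x => x ∈ ball y (2 ^ m * (t / 2)))).card : ℝ) := hcast
    _ ≤ ∑ _y ∈ w, Cd ^ m := Finset.sum_le_sum hterm
    _ = w.card * Cd ^ m := by rw [Finset.sum_const, nsmul_eq_mul]
    _ ≤ Cd * Cd ^ m := by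
        exact mul_le_mul_of_nonneg_right hw (by positivity)
    _ = Cd ^ (m + 1) := by ring

lemma exists_net (E : Set X) {t : ℝ} (ht : 0 < t)
    (hfin : ∃ B : ℕ, ∀ s : Finset X, ↑s ⊆ E →
      (∀ x ∈ s, ∀ y ∈ s, x ≠ y → t ≤ dist x y) → s.card ≤ B) :
    ∃ s : Finset X, ↑s ⊆ E ∧ (∀ x ∈ s, ∀ y ∈ s, x ≠ y → t ≤ dist x y) ∧
      E ⊆ ⋃ x ∈ s, ball x t := by
  classical
  obtain ⟨B, hB⟩ := hfin
  set 𝒞 : Set ℕ := {n | ∃ s : Finset X, ↑s ⊆ E ∧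
    (∀ x ∈ s, ∀ y ∈ s, x ≠ y → t ≤ dist x y) ∧ s.card = n} with h𝒞
  have hne : 𝒞.Nonempty := ⟨0, ∅, by simp⟩
  have hbdd : BddAbove 𝒞 := ⟨B, fun n ⟨s, h1, h2, h3⟩ => h3 ▸ hB s h1 h2⟩
  obtain ⟨s, hsE, hsep, hcard⟩ := Nat.sSup_mem hne hbdd
  refine ⟨s, hsE, hsep, ?_⟩
  intro y hy
  by_contra hyn
  have hdist : ∀ x ∈ s, t ≤ dist y x := by
    intro x hx
    by_contra hlt
    exact hyn (Set.mem_iUnion₂.2 ⟨x, hx, mem_ball.2 (lt_of_not_ge hlt)⟩)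
  have hys : y ∉ s := by
    intro hys
    have := hdist y hys
    simp at this
    linarith
  have hmem : s.card + 1 ∈ 𝒞 := by
    refine ⟨insert y s, ?_, ?_, ?_⟩
    · rw [Finset.coe_insert]
      exact Set.insert_subset hy hsE
    · intro a ha b hb hne2
      rcases Finset.mem_insert.1 ha with rfl | ha' <;>
        rcases Finset.mem_insert.1 hb with rfl | hb'
      · exact absurd rfl hne2
      · exact hdist b hb'
      · rw [dist_comm]; exact hdist a ha'
      · exact hsep a ha' b hb' hne2
    · rw [Finset.card_insert_of_notMem hys]
  have := le_csSup hbdd hmem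
  rw [hcard] at this
  omega

lemma min_le_rpow_mul {x y θ : ℝ} (hx : 0 ≤ x) (hy : 0 ≤ y) (hθ : 0 ≤ θ) (hθ1 : θ ≤ 1) :
    min x y ≤ x ^ θ * y ^ (1 - θ) := by
  rcases eq_or_lt_of_le hx with hx0 | hx0
  · rw [← hx0]
    simp only [min_def]
    split_ifs with h
    · positivity
    · push_neg at h; linarith
  rcases eq_or_lt_of_le hy with hy0 | hy0
  · rw [← hy0]
    simp only [min_def]
    split_ifs with h
    · linarith [min_le_right x 0, (min_le_iff.1 (le_refl (min x 0)))]
    · positivity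
  have hm : 0 < min x y := lt_min hx0 hy0
  calc min x y = (min x y) ^ θ * (min x y) ^ (1 - θ) := by
        rw [← Real.rpow_add hm]
        norm_num
  _ ≤ x ^ θ * y ^ (1 - θ) := by
      apply mul_le_mul
      · exact Real.rpow_le_rpow hm.le (min_le_left _ _) hθ
      · exact Real.rpow_le_rpow hm.le (min_le_right _ _) (by linarith)
      · positivity
      · positivity

lemma log_le_rpow {η ρ : ℝ} (hη : 0 < η) (hρ : 0 < ρ) :
    Real.log (1 / ρ) ≤ (1 / η) * ρ ^ (-η) := by
  have h1 : (1 / ρ) ^ η = ρ ^ (-η) := by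
    rw [Real.rpow_neg hρ.le, one_div, Real.inv_rpow hρ.le]
  have h2 : Real.log ((1 / ρ) ^ η) = η * Real.log (1 / ρ) := Real.log_rpow (by positivity) η
  have h3 : Real.log ((1 / ρ) ^ η) ≤ (1 / ρ) ^ η := by
    have := Real.log_le_sub_one_of_pos (x := (1 / ρ) ^ η) (by positivity)
    linarith
  rw [h2, h1] at h3
  rw [h1] at *
  calc Real.log (1 / ρ) = (1 / η) * (η * Real.log (1 / ρ)) := by field_simp
  _ ≤ (1 / η) * ρ ^ (-η) := by
      apply mul_le_mul_of_nonneg_left h3 (by positivity)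

lemma diam_image_le {Y : Type*} [MetricSpace Y] (f : X → Y) {α t : ℝ}
    (hα : 0 < α) (ht : 0 < t) (x : X) :
    EMetric.diam (f '' ball x t) ≤ holderCoef α f (ball x t) * ENNReal.ofReal ((2 * t) ^ α) := by
  apply EMetric.diam_le
  rintro a ⟨u, hu, rfl⟩ b ⟨v, hv, rfl⟩
  rcases eq_or_ne u v with rfl | huv
  · simp
  have hduv : 0 < dist u v := dist_pos.2 huv
  have hlt : dist u v ≤ 2 * t := by
    have h1 := mem_ball.1 hu
    have h2 := mem_ball.1 hv
    have := dist_triangle_right u v x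
    linarith
  have key : dist (f u) (f v) = (dist (f u) (f v) / dist u v ^ α) * dist u v ^ α := by
    field_simp
  rw [edist_dist, key, ENNReal.ofReal_mul (by positivity)]
  apply mul_le_mul'
  · apply le_iSup_of_le u
    apply le_iSup_of_le hu
    apply le_iSup_of_le v
    apply le_iSup_of_le hv
    exact le_iSup_of_le huv le_rfl
  · exact ENNReal.ofReal_le_ofReal (Real.rpow_le_rpow dist_nonneg hlt hα.le)

lemma coverNum_empty (r : ℝ) : coverNum (∅ : Set X) r = 0 := by
  apply le_antisymm _ zero_le
  have : ∃ U : Fin 0 → Set X,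
      (∀ i, EMetric.diam (U i) ≤ ENNReal.ofReal r) ∧ (∅ : Set X) ⊆ ⋃ i, U i :=
    ⟨Fin.elim0, fun i => i.elim0, by simp⟩
  exact le_trans (iInf_le_of_le 0 (iInf_le_of_le this le_rfl)) (by simp)

lemma dimB_empty : dimB (∅ : Set X) = 0 := by
  classical
  have : (fun r : ℝ =>
      if coverNum (∅ : Set X) r = ⊤ then (⊤ : EReal)
      else ((Real.log (coverNum (∅ : Set X) r).toReal / Real.log (1 / r) : ℝ) : EReal)) =
      fun _ => ((0:ℝ) : EReal) := by
    funext r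
    rw [coverNum_empty]
    simp
  rw [dimB, this, Filter.limsup_const]
  rfl

lemma one_le_coverNum (hE : E.Nonempty) (r : ℝ) : 1 ≤ coverNum E r := by
  refine le_iInf fun n => le_iInf fun hn => ?_
  obtain ⟨U, _, hc⟩ := hn
  rcases Nat.eq_zero_or_pos n with rfl | hn0
  · obtain ⟨x, hx⟩ := hE
    obtain ⟨i, _⟩ := Set.mem_iUnion.1 (hc hx)
    exact absurd i.2 (by omega)
  · exact_mod_cast hn0

lemma eventually_Ioo {m : ℝ} (hm : 0 < m) : ∀ᶠ ρ in 𝓝[>](0:ℝ), ρ ∈ Set.Ioo (0:ℝ) m := by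
  have : Set.Ioo (0:ℝ) m ∈ 𝓝[>](0:ℝ) :=
    Ioo_mem_nhdsGT_of_mem ⟨le_refl 0, hm⟩
  exact this

lemma coverNum_bound_of_dimB_lt {d' : ℝ} (h : dimB E < (d' : EReal)) :
    ∀ᶠ r in 𝓝[>](0:ℝ), coverNum E r ≠ ⊤ ∧ coverNum E r ≤ ENNReal.ofReal (r ^ (-d')) := by
  classical
  have hev := Filter.eventually_lt_of_limsup_lt h
  filter_upwards [hev, eventually_Ioo one_pos] with r hr hr1
  have hne : coverNum E r ≠ ⊤ := by
    intro htop
    rw [if_pos htop] at hr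
    exact absurd hr (by simp)
  refine ⟨hne, ?_⟩
  rw [if_neg hne] at hr
  obtain ⟨n, hn, _⟩ := coverNum_exists hne
  rw [hn] at hr ⊢
  simp only [ENNReal.toReal_natCast] at hr
  have hrval : Real.log (n : ℝ) / Real.log (1 / r) < d' := by exact_mod_cast hr
  rcases Nat.eq_zero_or_pos n with rfl | hn0
  · simp
  have hL : 0 < Real.log (1 / r) := Real.log_pos (by rw [lt_div_iff₀ hr1.1]; linarith [hr1.2])
  have hlog : Real.log (n : ℝ) < d' * Real.log (1 / r) := by
    rw [div_lt_iff₀ hL] at hrval; linarith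
  have hrd : Real.log (r ^ (-d')) = d' * Real.log (1 / r) := by
    rw [Real.log_rpow hr1.1, Real.log_div (by norm_num) (ne_of_gt hr1.1), Real.log_one]
    ring
  have hn1 : (1:ℝ) ≤ (n:ℝ) := by exact_mod_cast hn0
  have : (n : ℝ) < r ^ (-d') := by
    have := hrd ▸ hlog
    exact (Real.log_lt_log_iff (by linarith) (Real.rpow_pos_of_pos hr1.1 _)).1 this
  calc ((n:ℕ) : ℝ≥0∞) = ENNReal.ofReal (n:ℝ) := by simp
  _ ≤ ENNReal.ofReal (r ^ (-d')) := ENNReal.ofReal_le_ofReal this.le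

lemma EReal.le_coe_of_forall {x : EReal} {D : ℝ} (h : ∀ c : ℝ, D < c → x ≤ (c : EReal)) :
    x ≤ (D : EReal) := by
  by_contra hlt
  push_neg at hlt
  obtain ⟨y, hy1, hy2⟩ := EReal.exists_between_coe_real hlt
  exact absurd (h y (by exact_mod_cast hy1)) (not_le.2 hy2)

lemma dimB_le_of_coverNum_bound {D A : ℝ} (hA : 0 < A) (hD : 0 ≤ D)
    (h : ∀ᶠ ρ in 𝓝[>](0:ℝ), coverNum E ρ ≤ ENNReal.ofReal (A * ρ ^ (-D))) :
    dimB E ≤ (D : EReal) := by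
  classical
  apply EReal.le_coe_of_forall
  intro c hc
  have hcD : 0 < c - D := by linarith
  set M := max 1 (Real.log A / (c - D)) with hM
  have hM1 : 1 ≤ M := le_max_left _ _
  apply Filter.limsup_le_of_le
  · isBoundedDefault
  filter_upwards [h, eventually_Ioo (by positivity : (0:ℝ) < min 1 (Real.exp (-M)))]
    with ρ hρ hρm
  obtain ⟨hρ0, hρlt⟩ := hρm
  have hρ1 : ρ < 1 := lt_of_lt_of_le hρlt (min_le_left _ _)
  have hρe : ρ < Real.exp (-M) := lt_of_lt_of_le hρlt (min_le_right _ _)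
  have hL : M < Real.log (1 / ρ) := by
    rw [Real.log_div one_ne_zero (ne_of_gt hρ0), Real.log_one, zero_sub]
    have := Real.log_lt_log hρ0 hρe
    rw [Real.log_exp] at this
    linarith
  have hL0 : 0 < Real.log (1 / ρ) := lt_of_lt_of_le (by linarith) le_rfl
  have hne : coverNum E ρ ≠ ⊤ := by
    intro htop
    rw [htop] at hρ
    exact absurd hρ (by simp)
  rw [if_neg hne]
  obtain ⟨n, hn, _⟩ := coverNum_exists hne
  rw [hn] at hρ ⊢
  simp only [ENNReal.toReal_natCast]
  rcases Nat.eq_zero_or_pos n with rfl | hn0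
  · norm_num
    exact_mod_cast (by linarith : (0:ℝ) ≤ c)
  have hn1 : (1:ℝ) ≤ (n:ℝ) := by exact_mod_cast hn0
  have hnle : (n : ℝ) ≤ A * ρ ^ (-D) := by
    rw [show ((n:ℕ) : ℝ≥0∞) = ENNReal.ofReal (n:ℝ) by simp] at hρ
    exact (ENNReal.ofReal_le_ofReal_iff (by positivity)).1 hρ
  have hlog : Real.log (n:ℝ) ≤ Real.log A + D * Real.log (1 / ρ) := by
    calc Real.log (n:ℝ) ≤ Real.log (A * ρ ^ (-D)) :=
          Real.log_le_log (by linarith) hnle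
    _ = Real.log A + Real.log (ρ ^ (-D)) := Real.log_mul (ne_of_gt hA) (by positivity)
    _ = Real.log A + D * Real.log (1 / ρ) := by
        rw [Real.log_rpow hρ0, Real.log_div one_ne_zero (ne_of_gt hρ0), Real.log_one]
        ring
  have hfinal : Real.log (n:ℝ) / Real.log (1 / ρ) ≤ c := by
    rw [div_le_iff₀ hL0]
    have hMA : Real.log A ≤ (c - D) * Real.log (1 / ρ) := by
      have h1 : Real.log A / (c - D) ≤ M := le_max_right _ _
      have h2 : Real.log A / (c - D) ≤ Real.log (1 / ρ) := by linarith
      rw [div_le_iff₀ hcD] at h2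
      linarith [h2]
    have hDL : D * Real.log (1 / ρ) + (c - D) * Real.log (1 / ρ) = c * Real.log (1 / ρ) := by ring
    linarith
  exact_mod_cast hfinal

lemma dimB_nonneg_of_nonempty (hE : E.Nonempty) : (0 : EReal) ≤ dimB E := by
  classical
  have hev : ∀ᶠ r in 𝓝[>](0:ℝ), (0 : EReal) ≤
      (if coverNum E r = ⊤ then (⊤ : EReal)
       else ((Real.log (coverNum E r).toReal / Real.log (1 / r) : ℝ) : EReal)) := by
    filter_upwards [eventually_Ioo one_pos] with r hr
    split_ifs with h
    · exact le_top
    · have hL : 0 < Real.log (1 / r) := Real.log_pos (by rw [lt_div_iff₀ hr.1]; linarith [hr.2])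
      have h1 : (1:ℝ≥0∞) ≤ coverNum E r := one_le_coverNum hE r
      have h2 : (1:ℝ) ≤ (coverNum E r).toReal := by
        rw [show (1:ℝ) = (1:ℝ≥0∞).toReal by simp]
        exact ENNReal.toReal_mono h h1
      have : (0:ℝ) ≤ Real.log (coverNum E r).toReal / Real.log (1 / r) := by
        apply div_nonneg (Real.log_nonneg h2) hL.le
      exact_mod_cast this
  exact le_limsup_of_frequently_le hev.frequently

lemma min_bound {a b ρ p d' ap θ : ℝ} (ha : 0 < a) (hb : 0 < b) (hρ : 0 < ρ)
    (hθ0 : 0 ≤ θ) (hθ1 : θ ≤ 1) (hbal : θ * d' = (1 - θ) * ap) (u : ℝ) :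
    min (a * 2 ^ (u * d')) (b * ρ ^ (-p) * 2 ^ (-(u * ap))) ≤
      (a ^ θ * b ^ (1 - θ)) * ρ ^ (-(p * (1 - θ))) := by
  have h2 : (0:ℝ) < 2 := two_pos
  have e1 : (a * 2 ^ (u * d')) ^ θ = a ^ θ * 2 ^ (u * d' * θ) := by
    rw [Real.mul_rpow ha.le (Real.rpow_pos_of_pos h2 _).le, ← Real.rpow_mul h2.le]
  have e2 : (b * ρ ^ (-p) * 2 ^ (-(u * ap))) ^ (1 - θ) =
      b ^ (1 - θ) * ρ ^ (-p * (1 - θ)) * 2 ^ (-(u * ap) * (1 - θ)) := by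
    rw [Real.mul_rpow (by positivity) (Real.rpow_pos_of_pos h2 _).le,
      Real.mul_rpow hb.le (Real.rpow_pos_of_pos hρ _).le,
      ← Real.rpow_mul h2.le, ← Real.rpow_mul hρ.le]
  have e3 : (2:ℝ) ^ (u * d' * θ) * 2 ^ (-(u * ap) * (1 - θ)) = 1 := by
    rw [← Real.rpow_add h2]
    have : u * d' * θ + -(u * ap) * (1 - θ) = u * (θ * d' - (1 - θ) * ap) := by ring
    rw [this, hbal, sub_self, mul_zero, Real.rpow_zero]
  calc min (a * 2 ^ (u * d')) (b * ρ ^ (-p) * 2 ^ (-(u * ap)))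
      ≤ (a * 2 ^ (u * d')) ^ θ * (b * ρ ^ (-p) * 2 ^ (-(u * ap))) ^ (1 - θ) :=
        min_le_rpow_mul (by positivity) (by positivity) hθ0 hθ1
  _ = (a ^ θ * b ^ (1 - θ)) * ρ ^ (-(p * (1 - θ))) := by
      rw [e1, e2]
      have : -p * (1-θ) = -(p * (1-θ)) := by ring
      rw [this]
      linear_combination (a ^ θ * b ^ (1 - θ) * ρ ^ (-(p * (1 - θ)))) * e3

end Aux

set_option maxHeartbeats 1000000 in
/-- **Theorem 1.1.** If `X` is doubling, `f : X → Y` is `(p,α)`-compactly Hölder,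
and `E ⊆ X` is bounded with `dim_B E = dE`, then
`dim_B f(E) ≤ p dE / (α p + dE)`. -/
theorem minkowski_distortion_of_compactlyHolder
    {X Y : Type*} [MetricSpace X] [MetricSpace Y] (hX : DoublingSpace X)
    {p α : ℝ} (hp : 1 < p) (hα : α ∈ Set.Ioo (0:ℝ) 1)
    {f : X → Y} (hf : CompactlyHolder p α f)
    {E : Set X} (hE : IsBounded E) {dE : ℝ} (hdE : dimB E = (dE : EReal)) :
    dimB (f '' E) ≤ ((p * dE / (α * p + dE) : ℝ) : EReal) := by
  classical
  obtain ⟨hα0, hα1⟩ := hα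
  have hp0 : 0 < p := by linarith
  have hαp : 0 < α * p := by positivity
  obtain ⟨Cd, hCd1, hDb⟩ := hX
  obtain ⟨rstar, hrstar, Cstar, hCstar, hsum⟩ :=
    hf ∅ isCompact_empty (1/2) ⟨by norm_num, by norm_num⟩
  rcases E.eq_empty_or_nonempty with rfl | hEne
  · have h0 : dE = 0 := by
      rw [dimB_empty] at hdE
      exact_mod_cast hdE.symm
    rw [Set.image_empty, dimB_empty, h0]
    norm_num
  have hdE0 : 0 ≤ dE := by
    have := dimB_nonneg_of_nonempty hEne
    rw [hdE] at this
    exact_mod_cast this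
  apply EReal.le_coe_of_forall
  intro c hc
  -- choose d' > dE with p d'/(αp+d') < c
  obtain ⟨d', hd'c, hdd'⟩ : ∃ d', p * d' / (α * p + d') < c ∧ dE < d' := by
    have hden : α * p + dE ≠ 0 := by positivity
    have hcont : ContinuousAt (fun s => p * s / (α * p + s)) dE := by
      apply ContinuousAt.div
      · fun_prop
      · fun_prop
      · exact hden
    have hev : ∀ᶠ s in 𝓝 dE, p * s / (α * p + s) < c :=
      hcont.eventually_lt_const hc
    have hev2 : ∀ᶠ s in 𝓝[>] dE, p * s / (α * p + s) < c ∧ dE < s := by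
      filter_upwards [nhdsWithin_le_nhds hev, self_mem_nhdsWithin] with s h1 h2
      exact ⟨h1, h2⟩
    exact hev2.exists
  have hd'0 : 0 < d' := lt_of_le_of_lt hdE0 hdd'
  have hsumden : 0 < α * p + d' := by positivity
  set D' : ℝ := p * d' / (α * p + d') with hD'def
  have hD'0 : 0 ≤ D' := by positivity
  set η : ℝ := (c - D') / 2 with hηdef
  have hη : 0 < η := by rw [hηdef]; linarith
  set D'' : ℝ := D' + η with hD''def
  have hD''c : D'' < c := by rw [hD''def, hηdef]; linarith
  have hD''0 : 0 ≤ D'' := by rw [hD''def]; linarith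
  set θ : ℝ := α * p / (α * p + d') with hθdef
  have hθ0 : 0 ≤ θ := by positivity
  have hθ1 : θ ≤ 1 := by
    rw [hθdef, div_le_one hsumden]; linarith
  have hbal : θ * d' = (1 - θ) * (α * p) := by
    rw [hθdef]; field_simp; try ring
  have hpθ : p * (1 - θ) = D' := by
    rw [hθdef, hD'def]; field_simp; try ring
  -- covering number bound for E
  have hlt : dimB E < (d' : EReal) := by rw [hdE]; exact_mod_cast hdd'
  obtain ⟨u, hu, hsub⟩ := mem_nhdsGT_iff_exists_Ioo_subset.1
    (coverNum_bound_of_dimB_lt hlt)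
  have hcov : ∀ r ∈ Set.Ioo (0:ℝ) u, coverNum E r ≠ ⊤ ∧
      coverNum E r ≤ ENNReal.ofReal (r ^ (-d')) := fun r hr => hsub hr
  have hu0 : 0 < u := hu
  -- scales
  set t₀ : ℝ := min rstar u / 2 with ht₀def
  have ht₀ : 0 < t₀ := by
    rw [ht₀def]
    have := lt_min hrstar hu0
    linarith
  have ht₀r : t₀ < rstar := by
    rw [ht₀def]
    have := min_le_left rstar u
    linarith
  have ht₀u : t₀ < u := by
    rw [ht₀def]
    have := min_le_right rstar u
    linarith
  set t : ℕ → ℝ := fun k => t₀ * 2 ^ (-(k:ℝ)) with htdef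
  have htpos : ∀ k, 0 < t k := fun k => by
    rw [htdef]
    positivity
  have htle : ∀ k, t k ≤ t₀ := fun k => by
    have h1 : (2:ℝ) ^ (-(k:ℝ)) ≤ 1 :=
      Real.rpow_le_one_of_one_le_of_nonpos one_le_two (by simp)
    calc t k = t₀ * 2 ^ (-(k:ℝ)) := rfl
    _ ≤ t₀ * 1 := mul_le_mul_of_nonneg_left h1 ht₀.le
    _ = t₀ := mul_one _
  have htsucc : ∀ k, t k = 2 * t (k + 1) := fun k => by
    show t₀ * 2 ^ (-(k:ℝ)) = 2 * (t₀ * 2 ^ (-((k+1:ℕ):ℝ)))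
    rw [show (-((k+1:ℕ):ℝ)) = (-(k:ℝ)) + (-1) by push_cast; ring, Real.rpow_add two_pos,
      Real.rpow_neg_one]
    ring
  -- nets
  have hS : ∀ k : ℕ, ∃ s : Finset X, ↑s ⊆ E ∧
      (∀ x ∈ s, ∀ y ∈ s, x ≠ y → t k ≤ dist x y) ∧ E ⊆ ⋃ x ∈ s, ball x (t k) := by
    intro k
    apply exists_net E (htpos k)
    have hmem : t k / 2 ∈ Set.Ioo (0:ℝ) u :=
      ⟨by linarith [htpos k], by linarith [htle k, ht₀u]⟩
    obtain ⟨n₀, hn₀, _⟩ := coverNum_exists (hcov _ hmem).1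
    refine ⟨n₀, fun s hsE hsep => ?_⟩
    have := card_le_coverNum (E := E) (r := t k) s hsE hsep
      (by linarith [htpos k] : (0:ℝ) ≤ t k / 2) (by linarith [htpos k])
    rw [hn₀] at this
    exact_mod_cast this
  choose S hSE hSsep hScov using hS
  have hScard : ∀ k, ((S k).card : ℝ≥0∞) ≤ ENNReal.ofReal ((t k / 2) ^ (-d')) := by
    intro k
    have hmem : t k / 2 ∈ Set.Ioo (0:ℝ) u :=
      ⟨by linarith [htpos k], by linarith [htle k, ht₀u]⟩
    exact le_trans (card_le_coverNum (S k) (hSE k) (hSsep k)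
      (by linarith [htpos k]) (by linarith [htpos k])) (hcov _ hmem).2
  -- Hölder sums
  have Hsum : ∀ k, ∑ x ∈ S k, (holderCoef α f (ball x (t k))) ^ p ≤ ENNReal.ofReal Cstar := by
    intro k
    have hc1 : (∅ : Set X) ⊆ ⋃ i : Fin (S k).card, ball (((S k).equivFin.symm i : {x // x ∈ S k}) : X) (t k) :=
      Set.empty_subset _
    have hc2 : Pairwise fun i j : Fin (S k).card =>
        Disjoint (ball (((S k).equivFin.symm i : {x // x ∈ S k}) : X) (1/2 * t k))
          (ball (((S k).equivFin.symm j : {x // x ∈ S k}) : X) (1/2 * t k)) := by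
      intro i j hij
      have hne : (((S k).equivFin.symm i : {x // x ∈ S k}) : X) ≠
          (((S k).equivFin.symm j : {x // x ∈ S k}) : X) := by
        intro h
        exact hij (by simpa using congrArg (S k).equivFin (Subtype.ext h))
      have hd := hSsep k _ ((S k).equivFin.symm i).2 _ ((S k).equivFin.symm j).2 hne
      rw [Set.disjoint_left]
      intro z hzi hzj
      rw [mem_ball] at hzi hzj
      have htri := dist_triangle_right (((S k).equivFin.symm i : {x // x ∈ S k}) : X)
        (((S k).equivFin.symm j : {x // x ∈ S k}) : X) z
      rw [dist_comm] at hzi hzj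
      linarith [htpos k]
    have hall := hsum (Fin (S k).card) inferInstance
      (fun i => (((S k).equivFin.symm i : {x // x ∈ S k}) : X)) (t k) (htpos k)
      (by linarith [htle k, ht₀r]) hc1 hc2
    rw [tsum_fintype] at hall
    calc ∑ x ∈ S k, (holderCoef α f (ball x (t k))) ^ p
        = ∑ x : {x // x ∈ S k}, (holderCoef α f (ball (x : X) (t k))) ^ p :=
          (Finset.sum_coe_sort (S k) _).symm
    _ = ∑ i : Fin (S k).card,
          (holderCoef α f (ball ((((S k).equivFin.symm i : {x // x ∈ S k})) : X) (t k))) ^ p := by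
          apply Fintype.sum_equiv (S k).equivFin
          intro x
          rw [Equiv.symm_apply_apply]
    _ ≤ ENNReal.ofReal Cstar := hall
  -- constants
  set a : ℝ := (t₀ / 2) ^ (-d') with hadef
  have ha0 : 0 < a := by rw [hadef]; positivity
  set b : ℝ := Cd ^ 3 * Cstar * (4 * t₀) ^ (α * p) with hbdef
  have hCd0 : (0:ℝ) < Cd := by linarith
  have hb0 : 0 < b := by rw [hbdef]; positivity
  set A₁ : ℝ := a ^ θ * b ^ (1 - θ) with hA₁def
  have hA₁0 : 0 < A₁ := by rw [hA₁def]; positivity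
  set Cp : ℝ := Cstar ^ (1 / p) with hCpdef
  have hCp0 : 0 < Cp := by rw [hCpdef]; positivity
  set C₁ : ℝ := Cp * (2 * t₀) ^ α with hC₁def
  have hC₁0 : 0 < C₁ := by rw [hC₁def]; positivity
  have hlog2 : (0:ℝ) < Real.log 2 := Real.log_pos one_lt_two
  set κ₁ : ℝ := 1 + max 0 (Real.log C₁) / (α * Real.log 2) with hκ₁def
  have hκ₁0 : 0 < κ₁ := by
    rw [hκ₁def]
    have : 0 ≤ max 0 (Real.log C₁) / (α * Real.log 2) := by positivity
    linarith
  set κ₂ : ℝ := 1 / (α * Real.log 2) with hκ₂def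
  have hκ₂0 : 0 < κ₂ := by rw [hκ₂def]; positivity
  set A : ℝ := a + (κ₁ + 1 + κ₂ / η) * A₁ with hAdef
  have hA0 : 0 < A := by
    rw [hAdef]
    have : 0 < (κ₁ + 1 + κ₂ / η) * A₁ := by positivity
    linarith
  refine le_trans (dimB_le_of_coverNum_bound hA0 hD''0 ?_) (by exact_mod_cast hD''c.le)
  filter_upwards [eventually_Ioo one_pos] with ρ hρ
  obtain ⟨hρ0, hρ1⟩ := hρ
  -- terminal level
  have hexK : ∃ k : ℕ, Cp * (2 * t k) ^ α ≤ ρ := by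
    have hbase0 : (0:ℝ) < (2:ℝ) ^ (-α) := by positivity
    have hbase1 : (2:ℝ) ^ (-α) < 1 :=
      Real.rpow_lt_one_of_one_lt_of_neg one_lt_two (by linarith)
    have h1 : Filter.Tendsto (fun k : ℕ => ((2:ℝ) ^ (-α)) ^ k) Filter.atTop (𝓝 0) :=
      tendsto_pow_atTop_nhds_zero_of_lt_one hbase0.le hbase1
    have hε : 0 < ρ / (Cp * (2 * t₀) ^ α) := by positivity
    obtain ⟨k, hk⟩ := (h1.eventually_lt_const hε).exists
    refine ⟨k, ?_⟩
    have he : (2 * t k) ^ α = (2 * t₀) ^ α * ((2:ℝ) ^ (-α)) ^ k := by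
      have h2 : 2 * t k = (2 * t₀) * 2 ^ (-(k:ℝ)) := by
        show 2 * (t₀ * 2 ^ (-(k:ℝ))) = _
        ring
      rw [h2, Real.mul_rpow (by positivity) (by positivity)]
      congr 1
      rw [← Real.rpow_natCast ((2:ℝ) ^ (-α)) k, ← Real.rpow_mul (by norm_num : (0:ℝ) ≤ 2),
        ← Real.rpow_mul (by norm_num : (0:ℝ) ≤ 2)]
      ring_nf
    have h3 := (lt_div_iff₀ (by positivity : (0:ℝ) < Cp * (2*t₀)^α)).1 hk
    calc Cp * (2 * t k) ^ α = ((2:ℝ)^(-α))^k * (Cp * (2*t₀)^α) := by rw [he]; ring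
    _ ≤ ρ := h3.le
  set K : ℕ := Nat.find hexK with hKdef
  have hKspec : Cp * (2 * t K) ^ α ≤ ρ := Nat.find_spec hexK
  have hKmin : ∀ j < K, ¬ (Cp * (2 * t j) ^ α ≤ ρ) := fun j hj => Nat.find_min hexK hj
  have hL1ρ : 0 < Real.log (1 / ρ) := Real.log_pos (by rw [lt_div_iff₀ hρ0]; linarith)
  have hKb : (K : ℝ) ≤ κ₁ + κ₂ * Real.log (1 / ρ) := by
    have hgoal0 : (0:ℝ) ≤ κ₂ * Real.log (1/ρ) := by positivity
    rcases Nat.eq_zero_or_pos K with hK0 | hK0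
    · rw [hK0]
      push_cast
      exact add_nonneg hκ₁0.le hgoal0
    obtain ⟨m, hm⟩ : ∃ m, K = m + 1 := ⟨K - 1, by omega⟩
    have hbad := hKmin m (by omega)
    push_neg at hbad
    have he : Cp * (2 * t m) ^ α = C₁ * 2 ^ (-(m:ℝ) * α) := by
      have h2 : 2 * t m = (2 * t₀) * 2 ^ (-(m:ℝ)) := by
        show 2 * (t₀ * 2 ^ (-(m:ℝ))) = _
        ring
      rw [h2, Real.mul_rpow (by positivity) (by positivity), hC₁def,
        ← Real.rpow_mul (by norm_num : (0:ℝ) ≤ 2)]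
      ring
    rw [he] at hbad
    have hlog := Real.log_lt_log hρ0 hbad
    rw [Real.log_mul (ne_of_gt hC₁0) (by positivity), Real.log_rpow two_pos] at hlog
    have hlρ : Real.log ρ = - Real.log (1/ρ) := by
      rw [Real.log_div one_ne_zero (ne_of_gt hρ0), Real.log_one]
      ring
    rw [hlρ] at hlog
    -- m * (α * log 2) < log C₁ + log (1/ρ)
    have hm2 : (m:ℝ) * (α * Real.log 2) < Real.log C₁ + Real.log (1/ρ) := by
      have : (-(m:ℝ) * α) * Real.log 2 = -((m:ℝ) * (α * Real.log 2)) := by ring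
      rw [this] at hlog
      linarith
    have hmax : Real.log C₁ ≤ max 0 (Real.log C₁) := le_max_right _ _
    have hL : (0:ℝ) < α * Real.log 2 := by positivity
    have hm3 : (m:ℝ) ≤ (max 0 (Real.log C₁) + Real.log (1/ρ)) / (α * Real.log 2) := by
      rw [le_div_iff₀ hL]
      linarith
    rw [hm]
    push_cast
    rw [hκ₁def, hκ₂def]
    have hexp : (max 0 (Real.log C₁) + Real.log (1/ρ)) / (α * Real.log 2) =
        max 0 (Real.log C₁) / (α * Real.log 2) + 1 / (α * Real.log 2) * Real.log (1/ρ) := by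
      field_simp
    rw [hexp] at hm3
    linarith
  -- good balls
  set Good : ℕ → X → Prop := fun k x =>
    holderCoef α f (ball x (t k)) * ENNReal.ofReal ((2 * t k) ^ α) ≤ ENNReal.ofReal ρ
    with hGooddef
  have hGoodK : ∀ x ∈ S K, Good K x := by
    intro x hx
    have h1 : (holderCoef α f (ball x (t K))) ^ p ≤ ENNReal.ofReal Cstar :=
      le_trans (Finset.single_le_sum
        (f := fun x => (holderCoef α f (ball x (t K))) ^ p)
        (fun _ _ => zero_le) hx) (Hsum K)
    have h2 : holderCoef α f (ball x (t K)) ≤ ENNReal.ofReal Cp := by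
      have h3 := ENNReal.rpow_le_rpow h1 (by positivity : (0:ℝ) ≤ 1/p)
      rwa [← ENNReal.rpow_mul, mul_one_div_cancel (ne_of_gt hp0), ENNReal.rpow_one,
        ENNReal.ofReal_rpow_of_pos hCstar] at h3
    show holderCoef α f (ball x (t K)) * ENNReal.ofReal ((2 * t K) ^ α) ≤ ENNReal.ofReal ρ
    calc holderCoef α f (ball x (t K)) * ENNReal.ofReal ((2 * t K) ^ α)
        ≤ ENNReal.ofReal Cp * ENNReal.ofReal ((2 * t K) ^ α) := mul_le_mul_left h2 _
    _ = ENNReal.ofReal (Cp * (2 * t K) ^ α) := (ENNReal.ofReal_mul hCp0.le).symm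
    _ ≤ ENNReal.ofReal ρ := ENNReal.ofReal_le_ofReal hKspec
  set InG : ℕ → X → Prop := fun j y => ∃ x ∈ S j, y ∈ ball x (t j) ∧ Good j x with hInGdef
  have hexlvl : ∀ y ∈ E, ∃ j, InG j y := by
    intro y hy
    obtain ⟨x, hx, hyx⟩ := Set.mem_iUnion₂.1 (hScov K hy)
    exact ⟨K, x, hx, hyx, hGoodK x hx⟩
  set G : ℕ → Finset X := fun k => (S k).filter
    (fun x => Good k x ∧ ∃ y, y ∈ E ∧ y ∈ ball x (t k) ∧ ∀ j < k, ¬ InG j y) with hGdef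
  -- the cover
  have hcount : coverNum (f '' E) ρ ≤
      ∑ k ∈ Finset.range (K + 1), ((G k).card : ℝ≥0∞) := by
    set U : ℕ × X → Set Y := fun q => f '' ball q.2 (t q.1) with hUdef
    set sF : Finset (ℕ × X) := (Finset.range (K+1)).biUnion
      (fun k => (G k).image (fun x => (k, x))) with hsFdef
    have hdiam : ∀ q ∈ sF, EMetric.diam (U q) ≤ ENNReal.ofReal ρ := by
      intro q hq
      obtain ⟨k, hk, hq2⟩ := Finset.mem_biUnion.1 hq
      obtain ⟨x, hxG, rfl⟩ := Finset.mem_image.1 hq2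
      have hGood : Good k x := (Finset.mem_filter.1 hxG).2.1
      exact le_trans (diam_image_le f hα0 (htpos k) x) hGood
    have hcover : f '' E ⊆ ⋃ q ∈ sF, U q := by
      rintro _ ⟨y, hy, rfl⟩
      have hex := hexlvl y hy
      obtain ⟨x, hxS, hyx, hgx⟩ := Nat.find_spec hex
      have hjK : Nat.find hex ≤ K := by
        apply Nat.find_le
        obtain ⟨x', hx', hyx'⟩ := Set.mem_iUnion₂.1 (hScov K hy)
        exact ⟨x', hx', hyx', hGoodK x' hx'⟩
      have hxG : x ∈ G (Nat.find hex) := Finset.mem_filter.2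
        ⟨hxS, hgx, y, hy, hyx, fun i hi => Nat.find_min hex hi⟩
      apply Set.mem_iUnion₂.2
      refine ⟨(Nat.find hex, x), ?_, Set.mem_image_of_mem f hyx⟩
      exact Finset.mem_biUnion.2 ⟨Nat.find hex, Finset.mem_range.2 (by omega),
        Finset.mem_image_of_mem _ hxG⟩
    have hnat : sF.card ≤ ∑ k ∈ Finset.range (K + 1), (G k).card := by
      refine le_trans Finset.card_biUnion_le (Finset.sum_le_sum fun k _ => ?_)
      exact Finset.card_image_le
    calc coverNum (f '' E) ρ ≤ sF.card := coverNum_le_card sF U hdiam hcover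
    _ ≤ ∑ k ∈ Finset.range (K + 1), ((G k).card : ℝ≥0∞) := by exact_mod_cast hnat
  -- bounds on G k
  have hGk : ∀ k, ((G k).card : ℝ≥0∞) ≤
      (if k = 0 then ENNReal.ofReal a else 0) + ENNReal.ofReal (A₁ * ρ ^ (-D')) := by
    intro k
    have hGsub : ∀ k, ((G k).card : ℝ≥0∞) ≤ ENNReal.ofReal ((t k / 2) ^ (-d')) := by
      intro k
      refine le_trans ?_ (hScard k)
      exact_mod_cast Finset.card_le_card (Finset.filter_subset _ _)
    cases k with
    | zero =>
      rw [if_pos rfl]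
      refine le_trans (le_trans (hGsub 0) ?_) le_self_add
      apply le_of_eq
      have ht0 : t 0 = t₀ := by
        show t₀ * 2 ^ (-((0:ℕ):ℝ)) = t₀
        norm_num
      rw [ht0, hadef]
    | succ j =>
      rw [if_neg (by omega), zero_add]
      set Bad : Finset X := (S j).filter (fun z => ¬ Good j z) with hBaddef
      have htj0 : (0:ℝ) < 2 * t j := by linarith [htpos j]
      have hq0 : (0:ℝ) < (ρ / (2 * t j) ^ α) ^ p := by positivity
      -- Chebyshev bound on Bad
      have hBadbound : ((Bad.card : ℝ≥0∞)) ≤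
          ENNReal.ofReal (Cstar * (2 * t j) ^ (α * p) * ρ ^ (-p)) := by
        have hterm : ∀ z ∈ Bad, ENNReal.ofReal ((ρ / (2 * t j) ^ α) ^ p) ≤
            (holderCoef α f (ball z (t j))) ^ p := by
          intro z hz
          have hbad : ¬ (holderCoef α f (ball z (t j)) * ENNReal.ofReal ((2 * t j) ^ α) ≤
              ENNReal.ofReal ρ) := (Finset.mem_filter.1 hz).2
          have h1 : ENNReal.ofReal (ρ / (2 * t j) ^ α) ≤ holderCoef α f (ball z (t j)) := by
            rw [ENNReal.ofReal_div_of_pos (by positivity)]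
            rw [ENNReal.div_le_iff_le_mul
              (Or.inl (by simp [ENNReal.ofReal_eq_zero, not_le]; positivity))
              (Or.inl ENNReal.ofReal_ne_top)]
            exact (lt_of_not_ge hbad).le
          calc ENNReal.ofReal ((ρ / (2 * t j) ^ α) ^ p)
              = (ENNReal.ofReal (ρ / (2 * t j) ^ α)) ^ p :=
                (ENNReal.ofReal_rpow_of_nonneg (by positivity) hp0.le).symm
          _ ≤ _ := ENNReal.rpow_le_rpow h1 hp0.le
        have hsum1 : (Bad.card) • ENNReal.ofReal ((ρ / (2 * t j) ^ α) ^ p) ≤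
            ENNReal.ofReal Cstar :=
          le_trans (Finset.card_nsmul_le_sum Bad _ _ hterm)
            (le_trans (Finset.sum_le_sum_of_subset (Finset.filter_subset _ _)) (Hsum j))
        rw [nsmul_eq_mul] at hsum1
        have hqne : ENNReal.ofReal ((ρ / (2 * t j) ^ α) ^ p) ≠ 0 := by
          simp only [ne_eq, ENNReal.ofReal_eq_zero, not_le]
          exact hq0
        rw [← ENNReal.le_div_iff_mul_le (Or.inl hqne) (Or.inl ENNReal.ofReal_ne_top)] at hsum1
        refine hsum1.trans ?_
        rw [ENNReal.div_le_iff_le_mul (Or.inl hqne) (Or.inl ENNReal.ofReal_ne_top),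
          ← ENNReal.ofReal_mul (by positivity)]
        apply ENNReal.ofReal_le_ofReal
        apply le_of_eq
        have e1 : ((ρ / (2 * t j) ^ α)) ^ p = ρ ^ p / ((2 * t j) ^ (α * p)) := by
          rw [Real.div_rpow hρ0.le (by positivity), Real.rpow_mul htj0.le]
        rw [e1, Real.rpow_neg hρ0.le]
        have h2 : (0:ℝ) < ρ ^ p := by positivity
        have h3 : (0:ℝ) < (2 * t j) ^ (α * p) := by positivity
        field_simp
      -- doubling count
      have hGB : ((G (j+1)).card : ℝ) ≤ (Bad.card : ℝ) * Cd ^ 3 := by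
        have hsub : G (j+1) ⊆ Bad.biUnion
            (fun z => (G (j+1)).filter (fun x => x ∈ ball z (3 * t (j+1)))) := by
          intro x hx
          obtain ⟨hxS, hGood, y, hyE, hyb, hmin⟩ := Finset.mem_filter.1 hx
          obtain ⟨z, hzS, hyz⟩ := Set.mem_iUnion₂.1 (hScov j hyE)
          have hzb : ¬ Good j z := fun hg => hmin j (by omega) ⟨z, hzS, hyz, hg⟩
          refine Finset.mem_biUnion.2 ⟨z, Finset.mem_filter.2 ⟨hzS, hzb⟩,
            Finset.mem_filter.2 ⟨hx, ?_⟩⟩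
          rw [mem_ball]
          have h1 : dist y x < t (j+1) := mem_ball.1 hyb
          have h2 : dist y z < t j := mem_ball.1 hyz
          have h3 := dist_triangle x y z
          rw [dist_comm] at h1
          have h4 := htsucc j
          linarith
        have hcard1 : (G (j+1)).card ≤
            ∑ z ∈ Bad, ((G (j+1)).filter (fun x => x ∈ ball z (3 * t (j+1)))).card :=
          le_trans (Finset.card_le_card hsub) Finset.card_biUnion_le
        have hterm : ∀ z ∈ Bad,
            (((G (j+1)).filter (fun x => x ∈ ball z (3 * t (j+1)))).card : ℝ) ≤ Cd ^ 3 := by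
          intro z hz
          apply sep_card_in_ball hCd1 hDb (htpos (j+1)) 3 z
          · intro x hx y hy hxy
            have hxS : x ∈ S (j+1) :=
              Finset.filter_subset _ _ (Finset.mem_of_mem_filter x hx)
            have hyS : y ∈ S (j+1) :=
              Finset.filter_subset _ _ (Finset.mem_of_mem_filter y hy)
            exact hSsep (j+1) x hxS y hyS hxy
          · intro x hx
            simp only [Finset.coe_filter, Set.mem_setOf_eq] at hx
            apply ball_subset_ball _ hx.2
            have := htpos (j+1)
            norm_num
            linarith
        calc ((G (j+1)).card : ℝ)
            ≤ ∑ z ∈ Bad, (((G (j+1)).filter (fun x => x ∈ ball z (3 * t (j+1)))).card : ℝ) := by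
              exact_mod_cast hcard1
        _ ≤ ∑ _z ∈ Bad, Cd ^ 3 := Finset.sum_le_sum hterm
        _ = (Bad.card : ℝ) * Cd ^ 3 := by rw [Finset.sum_const, nsmul_eq_mul]
      -- combine the two bounds via min
      have hc2 : ((G (j+1)).card : ℝ≥0∞) ≤
          ENNReal.ofReal (Cd ^ 3 * (Cstar * (2 * t j) ^ (α * p) * ρ ^ (-p))) := by
        calc ((G (j+1)).card : ℝ≥0∞) = ENNReal.ofReal (((G (j+1)).card : ℝ)) := by
              rw [ENNReal.ofReal_natCast]
        _ ≤ ENNReal.ofReal ((Bad.card : ℝ) * Cd ^ 3) := ENNReal.ofReal_le_ofReal hGB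
        _ = (Bad.card : ℝ≥0∞) * ENNReal.ofReal (Cd ^ 3) := by
              rw [ENNReal.ofReal_mul (Nat.cast_nonneg _), ENNReal.ofReal_natCast]
        _ ≤ ENNReal.ofReal (Cstar * (2 * t j) ^ (α * p) * ρ ^ (-p)) *
              ENNReal.ofReal (Cd ^ 3) := mul_le_mul_left hBadbound _
        _ = ENNReal.ofReal (Cd ^ 3 * (Cstar * (2 * t j) ^ (α * p) * ρ ^ (-p))) := by
              rw [← ENNReal.ofReal_mul (by positivity)]
              ring_nf
      have hminb : ((G (j+1)).card : ℝ≥0∞) ≤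
          ENNReal.ofReal (min ((t (j+1) / 2) ^ (-d'))
            (Cd ^ 3 * (Cstar * (2 * t j) ^ (α * p) * ρ ^ (-p)))) := by
        rcases le_total ((t (j+1) / 2) ^ (-d'))
            (Cd ^ 3 * (Cstar * (2 * t j) ^ (α * p) * ρ ^ (-p))) with hle | hle
        · rw [min_eq_left hle]; exact hGsub (j+1)
        · rw [min_eq_right hle]; exact hc2
      refine hminb.trans (ENNReal.ofReal_le_ofReal ?_)
      -- real estimate via min_bound
      have hshape1 : (t (j+1) / 2) ^ (-d') = a * 2 ^ ((((j:ℕ)+1:ℕ):ℝ) * d') := by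
        have h1 : t (j+1) / 2 = (t₀ / 2) * 2 ^ (-(((j:ℕ)+1:ℕ):ℝ)) := by
          show (t₀ * 2 ^ (-(((j:ℕ)+1:ℕ):ℝ))) / 2 = _
          ring
        rw [h1, Real.mul_rpow (by positivity) (by positivity), hadef]
        congr 1
        rw [← Real.rpow_mul (by norm_num : (0:ℝ) ≤ 2)]
        congr 1
        ring
      have hshape2 : Cd ^ 3 * (Cstar * (2 * t j) ^ (α * p) * ρ ^ (-p)) =
          b * ρ ^ (-p) * 2 ^ (-((((j:ℕ)+1:ℕ):ℝ) * (α * p))) := by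
        have h1 : 2 * t j = (4 * t₀) * 2 ^ (-(((j:ℕ)+1:ℕ):ℝ)) := by
          show 2 * (t₀ * 2 ^ (-((j:ℕ):ℝ))) = _
          rw [show (-((((j:ℕ)+1:ℕ)):ℝ)) = (-((j:ℕ):ℝ)) + (-1) by push_cast; ring,
            Real.rpow_add two_pos, Real.rpow_neg_one]
          ring
        rw [h1, Real.mul_rpow (by positivity) (by positivity), hbdef,
          ← Real.rpow_mul (by norm_num : (0:ℝ) ≤ 2)]
        ring_nf
      rw [hshape1, hshape2]
      have hfin := min_bound (p := p) (d' := d') (ap := α * p) ha0 hb0 hρ0 hθ0 hθ1 hbal ((((j:ℕ)+1:ℕ)):ℝ)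
      rw [hpθ] at hfin
      rw [hA₁def]
      exact hfin
  -- sum it up
  have htotal : coverNum (f '' E) ρ ≤
      ENNReal.ofReal a + ((K + 1 : ℕ) : ℝ≥0∞) * ENNReal.ofReal (A₁ * ρ ^ (-D')) := by
    refine hcount.trans ?_
    calc ∑ k ∈ Finset.range (K + 1), ((G k).card : ℝ≥0∞)
        ≤ ∑ k ∈ Finset.range (K + 1),
            ((if k = 0 then ENNReal.ofReal a else 0) + ENNReal.ofReal (A₁ * ρ ^ (-D'))) :=
          Finset.sum_le_sum (fun k _ => hGk k)
    _ = (∑ k ∈ Finset.range (K + 1), (if k = 0 then ENNReal.ofReal a else 0)) +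
          (K + 1 : ℕ) • ENNReal.ofReal (A₁ * ρ ^ (-D')) := by
          rw [Finset.sum_add_distrib, Finset.sum_const, Finset.card_range]
    _ = ENNReal.ofReal a + ((K + 1 : ℕ) : ℝ≥0∞) * ENNReal.ofReal (A₁ * ρ ^ (-D')) := by
          rw [Finset.sum_ite_eq' (Finset.range (K + 1)) 0 (fun _ => ENNReal.ofReal a),
            if_pos (Finset.mem_range.2 (by omega)), nsmul_eq_mul]
  refine htotal.trans ?_
  -- final real computation
  have hcast : ((K + 1 : ℕ) : ℝ≥0∞) = ENNReal.ofReal (((K + 1 : ℕ) : ℝ)) :=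
    (ENNReal.ofReal_natCast _).symm
  rw [hcast, ← ENNReal.ofReal_mul (by positivity), ← ENNReal.ofReal_add ha0.le (by positivity)]
  apply ENNReal.ofReal_le_ofReal
  have h1 : Real.log (1/ρ) ≤ (1/η) * ρ ^ (-η) := log_le_rpow hη hρ0
  have h2 : (1:ℝ) ≤ ρ ^ (-η) :=
    Real.one_le_rpow_of_pos_of_le_one_of_nonpos hρ0 hρ1.le (by linarith)
  have hxpos : (0:ℝ) < ρ ^ (-η) := by positivity
  have h3 : (((K + 1 : ℕ)) : ℝ) ≤ (κ₁ + 1 + κ₂/η) * ρ ^ (-η) := by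
    push_cast
    have e1 : (K:ℝ) + 1 ≤ κ₁ + κ₂ * Real.log (1/ρ) + 1 := by linarith [hKb]
    have e2 : κ₂ * Real.log (1/ρ) ≤ κ₂ * ((1/η) * ρ ^ (-η)) :=
      mul_le_mul_of_nonneg_left h1 hκ₂0.le
    have e3 : κ₁ + 1 ≤ (κ₁ + 1) * ρ ^ (-η) := by
      exact le_mul_of_one_le_right (by linarith) h2
    have e4 : κ₂ * ((1/η) * ρ ^ (-η)) = (κ₂/η) * ρ ^ (-η) := by ring
    calc (K:ℝ) + 1 ≤ (κ₁ + 1) + κ₂ * Real.log (1/ρ) := by linarith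
    _ ≤ (κ₁ + 1) * ρ ^ (-η) + (κ₂/η) * ρ ^ (-η) := by
        rw [← e4]; exact add_le_add e3 e2
    _ = (κ₁ + 1 + κ₂/η) * ρ ^ (-η) := by ring
  have h4 : ρ ^ (-η) * ρ ^ (-D') = ρ ^ (-D'') := by
    rw [← Real.rpow_add hρ0]
    congr 1
    rw [hD''def]
    ring
  have h5 : (1:ℝ) ≤ ρ ^ (-D'') :=
    Real.one_le_rpow_of_pos_of_le_one_of_nonpos hρ0 hρ1.le (by linarith)
  have hX0 : (0:ℝ) ≤ A₁ * ρ ^ (-D') := by positivity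
  calc a + (((K + 1 : ℕ)) : ℝ) * (A₁ * ρ ^ (-D'))
      ≤ a * ρ ^ (-D'') + ((κ₁ + 1 + κ₂/η) * ρ ^ (-η)) * (A₁ * ρ ^ (-D')) := by
        have e5 : a ≤ a * ρ ^ (-D'') := le_mul_of_one_le_right ha0.le h5
        have e6 := mul_le_mul_of_nonneg_right h3 hX0
        linarith
  _ = A * ρ ^ (-D'') := by
      rw [hAdef]
      linear_combination ((κ₁ + 1 + κ₂/η) * A₁) * h4

end
end

section
/- Let (X,d) and (Y,d_Y) be metric spaces, p > 1, α ∈ (0,1), and let f : X → Y be a (p,α)-compactly Hölder mapping. Then f is locally α-Hölder continuous: for every point x ∈ X there exist r > 0 and C > 0 such that d_Y(f(y),f(z)) ≤ C·d(y,z)^α for all y,z ∈ B(x,r). In particular, f is continuous. -/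
open Filter Metric Set Topology MeasureTheory Bornology
open scoped ENNReal NNReal

noncomputable section

/-- A `(p,α)`-compactly Hölder mapping is locally `α`-Hölder continuous;
in particular it is continuous. -/
theorem compactlyHolder_locallyHolder
    {X Y : Type*} [MetricSpace X] [MetricSpace Y]
    {p α : ℝ} (hp : 1 < p) (hα : α ∈ Set.Ioo (0:ℝ) 1)
    {f : X → Y} (hf : CompactlyHolder p α f) :
    (∀ x : X, ∃ r > (0:ℝ), ∃ C > (0:ℝ), ∀ y ∈ Metric.ball x r, ∀ z ∈ Metric.ball x r,
      dist (f y) (f z) ≤ C * dist y z ^ α) ∧ Continuous f := by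
  have key : ∀ x : X, ∃ r > (0:ℝ), ∃ C > (0:ℝ), ∀ y ∈ Metric.ball x r, ∀ z ∈ Metric.ball x r,
      dist (f y) (f z) ≤ C * dist y z ^ α := by
    intro x
    obtain ⟨rE, hrE, CE, hCE, H⟩ := hf {x} isCompact_singleton (1/2) ⟨by norm_num, by norm_num⟩
    set r := rE / 2 with hr
    have hr0 : 0 < r := by positivity
    have hrlt : r < rE := by simp [hr]; linarith
    have hsum := H Unit inferInstance (fun _ => x) r hr0 hrlt
      (by intro y hy; simp at hy; subst hy; exact mem_iUnion.2 ⟨(), mem_ball_self hr0⟩)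
      (by intro i j hij; exact absurd (Subsingleton.elim i j) hij)
    have hle : holderCoef α f (Metric.ball x r) ^ p ≤ ENNReal.ofReal CE := by
      calc holderCoef α f (Metric.ball x r) ^ p
          = ∑' _ : Unit, holderCoef α f (Metric.ball x r) ^ p := by
            rw [tsum_eq_single () (by simp)]
        _ ≤ ENNReal.ofReal CE := hsum
    have hp0 : (0:ℝ) < p := by linarith
    have hne : holderCoef α f (Metric.ball x r) ≠ ⊤ := by
      intro h
      rw [h, ENNReal.top_rpow_of_pos hp0] at hle
      exact ENNReal.ofReal_ne_top (top_le_iff.1 hle)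
    set H0 := holderCoef α f (Metric.ball x r) with hH0
    refine ⟨r, hr0, H0.toReal + 1, by positivity, ?_⟩
    intro y hy z hz
    rcases eq_or_ne y z with rfl | hyz
    · have : (0:ℝ) ≤ (H0.toReal + 1) * dist y y ^ α := by positivity
      simpa using this
    · have hd0 : 0 < dist y z := dist_pos.2 hyz
      have hdα : 0 < dist y z ^ α := Real.rpow_pos_of_pos hd0 α
      have hmem : ENNReal.ofReal (dist (f y) (f z) / dist y z ^ α) ≤ H0 := by
        rw [hH0, holderCoef]
        exact le_iSup_of_le y (le_iSup_of_le hy (le_iSup_of_le z (le_iSup_of_le hz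
          (le_iSup_of_le hyz le_rfl))))
      have : dist (f y) (f z) / dist y z ^ α ≤ H0.toReal :=
        (ENNReal.ofReal_le_iff_le_toReal hne).1 hmem
      have h2 : dist (f y) (f z) / dist y z ^ α ≤ H0.toReal + 1 := by linarith
      calc dist (f y) (f z) = (dist (f y) (f z) / dist y z ^ α) * dist y z ^ α := by
            field_simp
        _ ≤ (H0.toReal + 1) * dist y z ^ α := by
            exact mul_le_mul_of_nonneg_right h2 hdα.le
  refine ⟨key, ?_⟩
  rw [continuous_iff_continuousAt]
  intro x
  obtain ⟨r, hr0, C, hC0, hH⟩ := key x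
  rw [ContinuousAt, tendsto_iff_dist_tendsto_zero]
  apply squeeze_zero' (Eventually.of_forall fun y => dist_nonneg)
  · filter_upwards [Metric.ball_mem_nhds x hr0] with y hy
    exact hH y hy x (mem_ball_self hr0)
  · have h1 : Tendsto (fun y : X => dist y x) (𝓝 x) (𝓝 0) := by
      simpa using (continuous_id.dist (continuous_const : Continuous fun _ : X => x)).tendsto x
    have h2 : Tendsto (fun y : X => dist y x ^ α) (𝓝 x) (𝓝 0) := by
      have := (Real.continuousAt_rpow_const 0 α (Or.inr hα.1.le)).tendsto.comp h1
      simpa [Real.zero_rpow (ne_of_gt hα.1), Function.comp_def] using this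
    simpa using h2.const_mul C


end
end
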